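/- Define ν(θ) = −(c₀/(π·cos c₀))·J₀(θ·c₀/π)·J₁((π−θ)·c₀/π) for θ ∈ [0,π]. Then: (i) ν(θ) ≥ 0 for every θ ∈ [0,π]; (ii) ∫₀^π ν(θ) dθ = 1; and (iii) for every β ∈ (0,π), ∫₀^π ν(θ) · (2·F_∞(β)/F_∞(θ)) · (∫₀^π 1{θ < α+β < π}·F(α) dα) dθ = ν(β), the integrand in θ being defined for θ ∈ [0,π). (Proposition 4.2 of the paper: ν is the invariant probability density of the Markov chain of angles along the spine.) -/

import Mathlib

open MeasureTheory Real

noncomputable def J0 (x : ℝ) : ℝ :=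
  ∑' k : ℕ, (-1 : ℝ) ^ k * (x / 2) ^ (2 * k) / ((Nat.factorial k : ℝ)) ^ 2

noncomputable def J1 (x : ℝ) : ℝ :=
  ∑' k : ℕ, (-1 : ℝ) ^ k * (x / 2) ^ (2 * k + 1) /
    ((Nat.factorial k : ℝ) * (Nat.factorial (k + 1) : ℝ))

noncomputable def c0 : ℝ := sInf {x : ℝ | 0 < x ∧ J0 x = 0}

open Finset

/-- coefficients of J0 as a series in x^(2k) -/
noncomputable def aJ (k : ℕ) : ℝ := (-1)^k / (4^k * ((Nat.factorial k : ℝ))^2)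
/-- coefficients of J1 as a series in x^(2k+1) -/
noncomputable def bJ (k : ℕ) : ℝ :=
  (-1)^k / (2 * 4^k * ((Nat.factorial k : ℝ) * (Nat.factorial (k+1) : ℝ)))
/-- coefficients of g = 2 J1(x)/x -/
noncomputable def gJ (k : ℕ) : ℝ :=
  (-1)^k / (4^k * ((Nat.factorial k : ℝ) * (Nat.factorial (k+1) : ℝ)))

noncomputable def gg (x : ℝ) : ℝ := ∑' k : ℕ, gJ k * x^(2*k)

lemma factorial_pos' (k : ℕ) : (0:ℝ) < (Nat.factorial k : ℝ) := by
  exact_mod_cast Nat.factorial_pos k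

lemma abs_aJ (k : ℕ) : |aJ k| ≤ 1 / (Nat.factorial k : ℝ) := by
  have h1 := factorial_pos' k
  have h4 : (0:ℝ) < 4^k := by positivity
  rw [aJ, abs_div, abs_pow, abs_neg, abs_one, one_pow, abs_of_pos (by positivity)]
  rw [div_le_div_iff₀ (by positivity) h1]
  have : (Nat.factorial k : ℝ) * (Nat.factorial k : ℝ) ≥ (Nat.factorial k : ℝ) * 1 := by
    nlinarith [Nat.one_le_iff_ne_zero.2 (Nat.factorial_ne_zero k),
      (by exact_mod_cast Nat.one_le_iff_ne_zero.2 (Nat.factorial_ne_zero k) : (1:ℝ) ≤ Nat.factorial k)]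
  have h4' : (1:ℝ) ≤ 4^k := one_le_pow₀ (by norm_num : (1:ℝ) ≤ 4)
  nlinarith

lemma abs_gJ (k : ℕ) : |gJ k| ≤ 1 / (Nat.factorial k : ℝ) := by
  have h1 := factorial_pos' k
  have h2 := factorial_pos' (k+1)
  have h2' : (1:ℝ) ≤ (Nat.factorial (k+1) : ℝ) := by
    exact_mod_cast Nat.one_le_iff_ne_zero.2 (Nat.factorial_ne_zero (k+1))
  have h4' : (1:ℝ) ≤ 4^k := one_le_pow₀ (by norm_num : (1:ℝ) ≤ 4)
  rw [gJ, abs_div, abs_pow, abs_neg, abs_one, one_pow, abs_of_pos (by positivity)]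
  rw [div_le_div_iff₀ (by positivity) h1]
  have k1 : (Nat.factorial k:ℝ) ≤ (Nat.factorial k:ℝ) * (Nat.factorial (k+1):ℝ) := by nlinarith
  have k2 : (Nat.factorial k:ℝ) * (Nat.factorial (k+1):ℝ) ≤ 4^k * ((Nat.factorial k:ℝ) * (Nat.factorial (k+1):ℝ)) := by nlinarith
  linarith

lemma abs_bJ (k : ℕ) : |bJ k| ≤ 1 / (Nat.factorial k : ℝ) := by
  have : bJ k = gJ k / 2 := by
    rw [bJ, gJ]; ring
  rw [this, abs_div]
  calc |gJ k| / |2| ≤ |gJ k| := by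
        rw [abs_two]; linarith [abs_nonneg (gJ k), abs_gJ k]
    _ ≤ _ := abs_gJ k

lemma summable_even {c : ℕ → ℝ} (hc : ∀ k, |c k| ≤ 1 / (Nat.factorial k : ℝ)) (x : ℝ) :
    Summable (fun k => c k * x^(2*k)) := by
  apply Summable.of_norm
  have h := Real.summable_pow_div_factorial (x^2)
  apply h.of_nonneg_of_le (fun k => norm_nonneg _)
  intro k
  have : ‖c k * x^(2*k)‖ = |c k| * (x^2)^k := by
    rw [norm_mul, Real.norm_eq_abs, Real.norm_eq_abs, pow_mul, abs_pow, abs_of_nonneg (sq_nonneg x)]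
  rw [this]
  have h2 : (0:ℝ) ≤ (x^2)^k := by positivity
  calc |c k| * (x^2)^k ≤ (1 / (Nat.factorial k : ℝ)) * (x^2)^k :=
        mul_le_mul_of_nonneg_right (hc k) h2
    _ = (x^2)^k / (Nat.factorial k : ℝ) := by ring

lemma hasSum_J0 (x : ℝ) : HasSum (fun k => aJ k * x^(2*k)) (J0 x) := by
  have hs := summable_even abs_aJ x
  have : J0 x = ∑' k, aJ k * x^(2*k) := by
    rw [J0]
    apply tsum_congr
    intro k
    have hx : (x/2)^(2*k) = x^(2*k) / 4^k := by
      rw [div_pow]; congr 1; rw [pow_mul]; norm_num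
    rw [hx, aJ]; ring
  rw [this]; exact hs.hasSum

lemma hasSum_gg (x : ℝ) : HasSum (fun k => gJ k * x^(2*k)) (gg x) :=
  (summable_even abs_gJ x).hasSum

lemma hasSum_J1 (x : ℝ) : HasSum (fun k => bJ k * x^(2*k+1)) (J1 x) := by
  have hs : Summable (fun k => bJ k * x^(2*k+1)) := by
    have := (summable_even abs_bJ x).mul_left x
    apply this.congr
    intro k; rw [pow_succ]; ring
  have : J1 x = ∑' k, bJ k * x^(2*k+1) := by
    rw [J1]
    apply tsum_congr
    intro k
    have h2k : ((2:ℝ))^(2*k+1) = 2 * 4^k := by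
      rw [pow_succ, pow_mul]; norm_num; ring
    rw [div_pow, h2k, bJ]; ring
  rw [this]; exact hs.hasSum

lemma J1_eq_gg (x : ℝ) : J1 x = x / 2 * gg x := by
  have hfun : (fun k => bJ k * x^(2*k+1)) = (fun k => x/2 * (gJ k * x^(2*k))) := by
    funext k; rw [bJ, gJ, pow_succ]; ring
  have h2 : HasSum (fun k => bJ k * x^(2*k+1)) (x/2 * gg x) := by
    rw [hfun]; exact (hasSum_gg x).mul_left (x/2)
  exact (hasSum_J1 x).unique h2

lemma even_series_continuous {c : ℕ → ℝ} (hc : ∀ k, |c k| ≤ 1 / (Nat.factorial k : ℝ)) :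
    Continuous (fun x => ∑' k, c k * x^(2*k)) := by
  rw [continuous_iff_continuousAt]
  intro x
  set R := |x| + 1 with hR
  have hRpos : 0 < R := by positivity
  have hmem : Metric.closedBall (0:ℝ) R ∈ nhds x := by
    apply Metric.closedBall_mem_nhds_of_mem
    simp only [Metric.mem_ball, Real.dist_eq, sub_zero, hR]
    linarith
  have hb : ∀ (n : ℕ), ∀ y ∈ Metric.closedBall (0:ℝ) R, ‖c n * y^(2*n)‖ ≤ (R^2)^n / (Nat.factorial n : ℝ) := by
    intro n y hy
    simp only [Metric.mem_closedBall, Real.dist_eq, sub_zero] at hy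
    rw [norm_mul, Real.norm_eq_abs, Real.norm_eq_abs, pow_mul, abs_pow]
    have h1 : |y^2| ≤ R^2 := by
      rw [abs_of_nonneg (sq_nonneg y)]
      nlinarith [abs_nonneg y, neg_abs_le y, le_abs_self y]
    calc |c n| * |y^2|^n ≤ (1/(Nat.factorial n : ℝ)) * (R^2)^n := by
          apply mul_le_mul (hc n) (pow_le_pow_left₀ (abs_nonneg _) h1 n) (by positivity) (by positivity)
      _ = (R^2)^n / (Nat.factorial n : ℝ) := by ring
  have huni := tendstoUniformlyOn_tsum (Real.summable_pow_div_factorial (R^2)) hb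
  have hcont : ContinuousOn (fun y => ∑' k, c k * y^(2*k)) (Metric.closedBall (0:ℝ) R) := by
    apply huni.continuousOn
    refine Filter.Frequently.of_forall fun t => ?_
    apply Continuous.continuousOn
    continuity
  exact hcont.continuousAt hmem

lemma continuous_J0 : Continuous J0 := by
  have : J0 = fun x => ∑' k, aJ k * x^(2*k) := by
    funext x; exact ((hasSum_J0 x).tsum_eq).symm
  rw [this]; exact even_series_continuous abs_aJ

lemma continuous_gg : Continuous gg := even_series_continuous abs_gJ

lemma continuous_J1 : Continuous J1 := by
  have : J1 = fun x => x/2 * gg x := funext J1_eq_gg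
  rw [this]
  exact (continuous_id.div_const 2).mul continuous_gg

lemma even_series_zero (c : ℕ → ℝ) : ∑' k, c k * (0:ℝ)^(2*k) = c 0 := by
  rw [tsum_eq_single 0]
  · norm_num
  · intro k hk
    have : 2*k ≠ 0 := by omega
    rw [zero_pow this, mul_zero]

lemma J0_zero : J0 0 = 1 := by
  rw [← (hasSum_J0 0).tsum_eq, even_series_zero, aJ]; norm_num

lemma J1_zero : J1 0 = 0 := by rw [J1_eq_gg]; ring

lemma gg_zero : gg 0 = 1 := by
  rw [gg, even_series_zero, gJ]; norm_num

open Finset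

noncomputable def cb (n : ℕ) : ℝ := (Nat.centralBinom n : ℝ)

lemma cb_succ (j : ℕ) : ((j:ℝ)+1) * cb (j+1) = (4*j+2) * cb j := by
  have := Nat.succ_mul_centralBinom_succ j
  have h := congrArg (fun m : ℕ => (m:ℝ)) this
  simp only [Nat.cast_mul, Nat.cast_add, Nat.cast_one, Nat.cast_ofNat] at h
  rw [cb, cb]; push_cast; linarith

noncomputable def Sq (n : ℕ) : ℝ := ∑ j ∈ range (n+1), cb j * cb (n - j)
noncomputable def Wq (n : ℕ) : ℝ := ∑ j ∈ range (n+1), (j:ℝ) * cb j * cb (n - j)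

lemma Wq_reflect (n : ℕ) : Wq n + Wq n = n * Sq n := by
  have h := Finset.sum_range_reflect (fun j => (j:ℝ) * cb j * cb (n - j)) (n+1)
  have h2 : Wq n = ∑ j ∈ range (n+1), ((n:ℝ) - j) * cb (n - j) * cb j := by
    rw [Wq, ← h]
    apply Finset.sum_congr rfl
    intro j hj
    have hj' : j ≤ n := by simpa [Nat.lt_succ_iff] using hj
    have e1 : n + 1 - 1 - j = n - j := by omega
    have e2 : n - (n - j) = j := by omega
    rw [e1, e2]
    congr 1
    push_cast [Nat.cast_sub hj']
    ring
  nth_rewrite 2 [h2]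
  rw [Wq, ← Finset.sum_add_distrib, Sq, Finset.mul_sum]
  apply Finset.sum_congr rfl
  intro j hj
  ring

lemma Sq_succ (n : ℕ) : Sq (n+1) = 4 * Sq n := by
  have key : ∑ j ∈ range (n+1), ((j:ℝ)+1) * cb (j+1) * cb (n - j)
      = 4 * Wq n + 2 * Sq n := by
    rw [Wq, Sq, Finset.mul_sum, Finset.mul_sum, ← Finset.sum_add_distrib]
    apply Finset.sum_congr rfl
    intro j hj
    rw [show ((j:ℝ)+1) * cb (j+1) * cb (n-j) = (((j:ℝ)+1) * cb (j+1)) * cb (n-j) by ring, cb_succ]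
    ring
  have key2 : Wq (n+1) = ∑ j ∈ range (n+1), ((j:ℝ)+1) * cb (j+1) * cb (n - j) := by
    rw [Wq, Finset.sum_range_succ' (fun i => (i:ℝ) * cb i * cb (n+1-i)) (n+1)]
    simp only [Nat.cast_zero, zero_mul, add_zero, Nat.cast_add, Nat.cast_one]
    apply Finset.sum_congr rfl
    intro j hj
    have : n + 1 - (j+1) = n - j := by omega
    rw [this]
    try push_cast
    try ring
  have hrefl := Wq_reflect (n+1)
  have hrefl' := Wq_reflect n
  rw [key2, key] at hrefl
  push_cast at hrefl
  -- (4 Wq n + 2 Sq n) + (4 Wq n + 2 Sq n) = (n+1) Sq (n+1)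
  -- and 2 Wq n = n Sq n
  nlinarith [hrefl, hrefl']

lemma qI (n : ℕ) : Sq n = 4^n := by
  induction n with
  | zero => simp [Sq, cb, Nat.centralBinom]
  | succ n ih => rw [Sq_succ, ih]; ring

lemma cb_eq_choose (n : ℕ) : cb n = ((2*n).choose n : ℝ) := by rw [cb, Nat.centralBinom]

lemma qA (n : ℕ) : 2 * ∑ j ∈ range (n+1), cb j * (((2*(n-j)+1).choose (n-j) : ℕ) : ℝ)
    = 4^(n+1) - cb (n+1) := by
  have hterm : ∀ k : ℕ, 2 * (((2*k+1).choose k : ℕ) : ℝ) = cb (k+1) := by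
    intro k
    have h1 : (2*(k+1)).choose (k+1) = (2*k+1).choose k + (2*k+1).choose (k+1) := by
      have : 2*(k+1) = (2*k+1) + 1 := by omega
      rw [this, Nat.choose_succ_succ' (2*k+1) k]
    have h2 : (2*k+1).choose (k+1) = (2*k+1).choose k := by
      have := Nat.choose_symm (show k+1 ≤ 2*k+1 by omega)
      have e : 2*k+1 - (k+1) = k := by omega
      rw [e] at this
      exact this.symm
    rw [cb, Nat.centralBinom, h1, h2]
    push_cast; ring
  have : ∑ j ∈ range (n+1), cb j * cb (n-j+1) = 4^(n+1) - cb (n+1) := by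
    have hS := qI (n+1)
    rw [Sq, Finset.sum_range_succ] at hS
    have e : n + 1 - (n+1) = 0 := by omega
    rw [e] at hS
    have hcb0 : cb 0 = 1 := by simp [cb, Nat.centralBinom]
    rw [hcb0, mul_one] at hS
    have : ∑ j ∈ range (n+1), cb j * cb (n+1-j) = ∑ j ∈ range (n+1), cb j * cb (n-j+1) := by
      apply Finset.sum_congr rfl
      intro j hj
      have hj' : j ≤ n := by simpa [Nat.lt_succ_iff] using hj
      congr 2
      omega
    linarith [this ▸ hS]
  rw [Finset.mul_sum]
  rw [← this]
  apply Finset.sum_congr rfl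
  intro j hj
  rw [← hterm (n-j)]
  ring

-- e_j = cb j / (j+1)
noncomputable def eb (j : ℕ) : ℝ := cb j / ((j:ℝ)+1)

lemma eb_succ (j : ℕ) : ((j:ℝ)+2) * eb (j+1) = (4*j+2) * eb j := by
  have h := cb_succ j
  rw [eb, eb]
  have h1 : ((j:ℝ)+1) ≠ 0 := by positivity
  have h2 : ((j:ℝ)+2) ≠ 0 := by positivity
  field_simp
  push_cast
  nlinarith [h]

noncomputable def Uq (n : ℕ) : ℝ := ∑ j ∈ range (n+1), eb j * cb (n - j)

lemma Uq_rec (n : ℕ) : ((n:ℝ)+2) * Uq (n+1) = (4*n+4) * Uq n + cb (n+1) := by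
  have hA : ∑ j ∈ range (n+2), ((j:ℝ)+1) * eb j * cb (n+1-j)
      = (∑ j ∈ range (n+1), ((4*j+2) * eb j) * cb (n-j)) + cb (n+1) := by
    rw [Finset.sum_range_succ' (fun i => ((i:ℝ)+1) * eb i * cb (n+1-i)) (n+1)]
    have h0 : ((0:ℕ):ℝ) + 1 = 1 := by norm_num
    have he0 : eb 0 = 1 := by simp [eb, cb, Nat.centralBinom]
    congr 1
    · apply Finset.sum_congr rfl
      intro j hj
      have e : n + 1 - (j+1) = n - j := by omega
      rw [e]
      push_cast
      rw [show ((j:ℝ)+1+1) * eb (j+1) * cb (n-j) = (((j:ℝ)+2) * eb (j+1)) * cb (n-j) by ring, eb_succ]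
    · simp [he0]
  have hB : ∑ j ∈ range (n+2), (((n+1-j : ℕ)):ℝ) * eb j * cb (n+1-j)
      = ∑ j ∈ range (n+1), ((4*(((n-j:ℕ)):ℝ)+2) * eb j) * cb (n-j) := by
    rw [Finset.sum_range_succ]
    have e : n + 1 - (n+1) = 0 := by omega
    rw [e]
    simp only [Nat.cast_zero, zero_mul]
    rw [add_zero]
    apply Finset.sum_congr rfl
    intro j hj
    have hj' : j ≤ n := by simpa [Nat.lt_succ_iff] using hj
    have e1 : n + 1 - j = (n - j) + 1 := by omega
    rw [e1]
    rw [show (((n-j+1 : ℕ)):ℝ) * eb j * cb ((n-j)+1) = eb j * (((((n-j):ℕ):ℝ)+1) * cb ((n-j)+1)) by push_cast; ring]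
    rw [cb_succ]
    ring
  have hAB : ((n:ℝ)+2) * Uq (n+1)
      = (∑ j ∈ range (n+2), ((j:ℝ)+1) * eb j * cb (n+1-j))
        + ∑ j ∈ range (n+2), (((n+1-j : ℕ)):ℝ) * eb j * cb (n+1-j) := by
    rw [Uq, Finset.mul_sum, ← Finset.sum_add_distrib]
    apply Finset.sum_congr rfl
    intro j hj
    have hj' : j ≤ n + 1 := by simpa [Nat.lt_succ_iff] using hj
    have : (((n+1-j : ℕ)):ℝ) = (n:ℝ) + 1 - j := by push_cast [Nat.cast_sub hj']; ring
    rw [this]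
    ring
  have hsum : (∑ j ∈ range (n+1), ((4*j+2) * eb j) * cb (n-j))
      + ∑ j ∈ range (n+1), ((4*(((n-j:ℕ)):ℝ)+2) * eb j) * cb (n-j) = (4*n+4) * Uq n := by
    rw [← Finset.sum_add_distrib, Uq, Finset.mul_sum]
    apply Finset.sum_congr rfl
    intro j hj
    have hj' : j ≤ n := by simpa [Nat.lt_succ_iff] using hj
    have : (((n-j : ℕ)):ℝ) = (n:ℝ) - j := by push_cast [Nat.cast_sub hj']; ring
    rw [this]
    ring
  rw [hAB, hA, hB]
  linarith [hsum]

lemma choose_rec_q (n : ℕ) : ((n:ℝ)+2) * (((2*(n+1)+1).choose (n+1) : ℕ) : ℝ)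
    = (4*n+4) * (((2*n+1).choose n : ℕ) : ℝ) + cb (n+1) := by
  have h1 : (((2*(n+1)+1).choose (n+1) : ℕ) : ℝ)
      = ((2*n+3).factorial : ℝ) / ((n+1).factorial * (n+2).factorial) := by
    rw [show 2*(n+1)+1 = 2*n+3 by ring, Nat.cast_choose ℝ (by omega),
      show 2*n+3 - (n+1) = n+2 by omega]
  have h2 : (((2*n+1).choose n : ℕ) : ℝ)
      = ((2*n+1).factorial : ℝ) / ((n).factorial * (n+1).factorial) := by
    rw [Nat.cast_choose ℝ (by omega), show 2*n+1 - n = n+1 by omega]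
  have h3 : cb (n+1) = ((2*n+2).factorial : ℝ) / ((n+1).factorial * (n+1).factorial) := by
    rw [cb, Nat.centralBinom, Nat.cast_choose ℝ (by omega),
      show 2*(n+1) = 2*n+2 by ring, show 2*n+2 - (n+1) = n+1 by omega]
  rw [h1, h2, h3]
  have e3 : ((2*n+3).factorial : ℝ) = (2*(n:ℝ)+3) * (2*(n:ℝ)+2) * ((2*n+1).factorial : ℝ) := by
    rw [show 2*n+3 = (2*n+2)+1 by ring, show 2*n+2 = (2*n+1)+1 by ring]
    push_cast [Nat.factorial_succ]
    ring
  have e2 : ((2*n+2).factorial : ℝ) = (2*(n:ℝ)+2) * ((2*n+1).factorial : ℝ) := by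
    rw [show 2*n+2 = (2*n+1)+1 by ring]
    push_cast [Nat.factorial_succ]
    ring
  have e1 : ((n+2).factorial : ℝ) = ((n:ℝ)+2) * ((n+1).factorial : ℝ) := by
    rw [show n+2 = (n+1)+1 by ring]
    push_cast [Nat.factorial_succ]
    ring
  have e0 : ((n+1).factorial : ℝ) = ((n:ℝ)+1) * ((n).factorial : ℝ) := by
    push_cast [Nat.factorial_succ]
    ring
  have p1 : ((n).factorial : ℝ) ≠ 0 := by positivity
  have p2 : ((n+1).factorial : ℝ) ≠ 0 := by positivity
  have p4 : ((2*n+1).factorial : ℝ) ≠ 0 := by positivity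
  rw [e3, e2, e1, e0]
  field_simp
  ring

lemma qB (n : ℕ) : Uq n = (((2*n+1).choose n : ℕ) : ℝ) := by
  induction n with
  | zero => simp [Uq, eb, cb, Nat.centralBinom]
  | succ n ih =>
    have h := Uq_rec n
    rw [ih] at h
    have h2 := choose_rec_q n
    have hne : ((n:ℝ)+2) ≠ 0 := by positivity
    have heq : ((n:ℝ)+2) * Uq (n+1) = ((n:ℝ)+2) * (((2*(n+1)+1).choose (n+1) : ℕ) : ℝ) := by
      rw [h, h2]
    exact mul_left_cancel₀ hne heq


lemma pC (k : ℕ) : bJ k / (2*(k:ℝ)+2) = -aJ (k+1) := by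
  rw [bJ, aJ]
  have e0 : ((k+1).factorial : ℝ) = ((k:ℝ)+1) * ((k).factorial : ℝ) := by
    push_cast [Nat.factorial_succ]; ring
  have p1 : ((k).factorial : ℝ) ≠ 0 := by positivity
  have h2 : (0:ℝ) < 4^k := by positivity
  rw [e0]
  field_simp
  ring

lemma term_pA (j k : ℕ) :
    aJ j * bJ k * (((2*j).factorial : ℝ) * ((2*k+1).factorial : ℝ) / ((2*(j+k)+2).factorial : ℝ))
    = (-1)^(j+k) / (2*4^(j+k) * ((2*(j+k)+2).factorial : ℝ))
      * (cb j * (((2*k+1).choose k : ℕ):ℝ)) := by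
  rw [aJ, bJ, cb, Nat.centralBinom,
    Nat.cast_choose ℝ (show j ≤ 2*j by omega),
    Nat.cast_choose ℝ (show k ≤ 2*k+1 by omega),
    show 2*j - j = j by omega, show 2*k+1-k = k+1 by omega,
    pow_add ((-1:ℝ)) j k, pow_add (4:ℝ) j k]
  have p1 : ((j).factorial : ℝ) ≠ 0 := by positivity
  have p2 : ((k).factorial : ℝ) ≠ 0 := by positivity
  have p3 : ((k+1).factorial : ℝ) ≠ 0 := by positivity
  have p4 : ((2*(j+k)+2).factorial : ℝ) ≠ 0 := by positivity
  have h4j : ((4:ℝ))^j ≠ 0 := by positivity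
  have h4k : ((4:ℝ))^k ≠ 0 := by positivity
  field_simp

lemma pA (n : ℕ) :
    ∑ p ∈ Finset.HasAntidiagonal.antidiagonal n,
      aJ p.1 * bJ p.2 * (((2*p.1).factorial:ℝ) * ((2*p.2+1).factorial:ℝ) / ((2*n+2).factorial:ℝ))
    = aJ (n+1) + (-1)^n / ((2*n+2).factorial:ℝ) := by
  rw [Finset.Nat.sum_antidiagonal_eq_sum_range_succ_mk]
  have hterm : ∀ j ∈ range (n+1),
      aJ j * bJ (n-j) * (((2*j).factorial:ℝ) * ((2*(n-j)+1).factorial:ℝ) / ((2*n+2).factorial:ℝ))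
      = ((-1)^n / (2*4^n * ((2*n+2).factorial : ℝ))) * (cb j * (((2*(n-j)+1).choose (n-j) : ℕ):ℝ)) := by
    intro j hj
    have hj' : j ≤ n := by simpa [Nat.lt_succ_iff] using hj
    have hjk : j + (n - j) = n := by omega
    have := term_pA j (n-j)
    rw [hjk] at this
    exact this
  rw [Finset.sum_congr rfl hterm, ← Finset.mul_sum]
  have hqa := qA n
  have hsum : ∑ j ∈ range (n+1), cb j * (((2*(n-j)+1).choose (n-j) : ℕ):ℝ)
      = (4^(n+1) - cb (n+1)) / 2 := by linarith
  rw [hsum]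
  rw [aJ, cb, Nat.centralBinom, Nat.cast_choose ℝ (show n+1 ≤ 2*(n+1) by omega),
    show 2*(n+1) - (n+1) = n+1 by omega, show 2*(n+1) = 2*n+2 by ring]
  have p1 : ((n+1).factorial : ℝ) ≠ 0 := by positivity
  have p4 : ((2*n+2).factorial : ℝ) ≠ 0 := by positivity
  have h4 : ((4:ℝ))^n ≠ 0 := by positivity
  field_simp
  ring

lemma term_pB (j k : ℕ) :
    gJ j * aJ k * (((2*j).factorial : ℝ) * ((2*k).factorial : ℝ) / ((2*(j+k)+1).factorial : ℝ))
    = (-1)^(j+k) / (4^(j+k) * ((2*(j+k)+1).factorial : ℝ)) * (eb j * cb k) := by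
  rw [gJ, aJ, eb, cb_eq_choose, cb_eq_choose,
    Nat.cast_choose ℝ (show j ≤ 2*j by omega), show 2*j - j = j by omega,
    Nat.cast_choose ℝ (show k ≤ 2*k by omega), show 2*k - k = k by omega,
    pow_add ((-1:ℝ)) j k, pow_add (4:ℝ) j k]
  have e0 : ((j+1).factorial : ℝ) = ((j:ℝ)+1) * ((j).factorial : ℝ) := by
    push_cast [Nat.factorial_succ]; ring
  rw [e0]
  have p1 : ((j).factorial : ℝ) ≠ 0 := by positivity
  have p2 : ((k).factorial : ℝ) ≠ 0 := by positivity
  have p4 : ((2*(j+k)+1).factorial : ℝ) ≠ 0 := by positivity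
  have h4j : ((4:ℝ))^j ≠ 0 := by positivity
  have h4k : ((4:ℝ))^k ≠ 0 := by positivity
  have hj1 : ((j:ℝ)+1) ≠ 0 := by positivity
  field_simp

lemma pB (n : ℕ) :
    ∑ p ∈ Finset.HasAntidiagonal.antidiagonal n,
      gJ p.1 * aJ p.2 * (((2*p.1).factorial:ℝ) * ((2*p.2).factorial:ℝ) / ((2*n+1).factorial:ℝ))
    = gJ n := by
  rw [Finset.Nat.sum_antidiagonal_eq_sum_range_succ_mk]
  have hterm : ∀ j ∈ range (n+1),
      gJ j * aJ (n-j) * (((2*j).factorial:ℝ) * ((2*(n-j)).factorial:ℝ) / ((2*n+1).factorial:ℝ))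
      = ((-1)^n / (4^n * ((2*n+1).factorial : ℝ))) * (eb j * cb (n-j)) := by
    intro j hj
    have hj' : j ≤ n := by simpa [Nat.lt_succ_iff] using hj
    have hjk : j + (n - j) = n := by omega
    have := term_pB j (n-j)
    rw [hjk] at this
    exact this
  rw [Finset.sum_congr rfl hterm, ← Finset.mul_sum]
  have hqb : ∑ j ∈ range (n+1), eb j * cb (n-j) = (((2*n+1).choose n : ℕ) : ℝ) := qB n
  rw [hqb, Nat.cast_choose ℝ (show n ≤ 2*n+1 by omega), show 2*n+1-n = n+1 by omega, gJ]
  have p1 : ((n).factorial : ℝ) ≠ 0 := by positivity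
  have p2 : ((n+1).factorial : ℝ) ≠ 0 := by positivity
  have p4 : ((2*n+1).factorial : ℝ) ≠ 0 := by positivity
  have h4 : ((4:ℝ))^n ≠ 0 := by positivity
  field_simp


lemma beta_nat (b : ℕ) : ∀ (a : ℕ) (x : ℝ), (∫ t in (0:ℝ)..x, t^a * (x-t)^b)
    = x^(a+b+1) * ((Nat.factorial a : ℝ) * (Nat.factorial b : ℝ)) / (Nat.factorial (a+b+1) : ℝ) := by
  induction b with
  | zero =>
    intro a x
    simp only [pow_zero, mul_one, Nat.factorial_zero, Nat.cast_one]
    rw [integral_pow]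
    have : (Nat.factorial (a+0+1) : ℝ) = ((a:ℝ)+1) * (Nat.factorial a : ℝ) := by
      push_cast [Nat.factorial_succ]; ring
    rw [this]
    have h1 : ((a:ℝ)+1) ≠ 0 := by positivity
    have h2 : ((Nat.factorial a : ℝ)) ≠ 0 := by positivity
    field_simp
    ring
  | succ b ih =>
    intro a x
    have hD : ∀ t : ℝ, HasDerivAt (fun t => t^(a+1) * (x-t)^(b+1) / ((a:ℝ)+1))
        (t^a * (x-t)^(b+1) - (((b:ℝ)+1)/((a:ℝ)+1)) * (t^(a+1) * (x-t)^b)) t := by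
      intro t
      have h1 : HasDerivAt (fun t : ℝ => t^(a+1)) (((a:ℝ)+1) * t^a) t := by
        have := hasDerivAt_pow (a+1) t
        simpa using this
      have h2 : HasDerivAt (fun t : ℝ => (x-t)^(b+1)) (-(((b:ℝ)+1) * (x-t)^b)) t := by
        have hinner : HasDerivAt (fun t : ℝ => x - t) (-1) t := by
          simpa using (hasDerivAt_id t).const_sub x
        have houter := hasDerivAt_pow (b+1) (x-t)
        have := (houter.comp t hinner)
        simpa [Function.comp_def] using this
      have := (h1.mul h2).div_const ((a:ℝ)+1)
      refine this.congr_deriv ?_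
      have ha : ((a:ℝ)+1) ≠ 0 := by positivity
      field_simp
      ring
    have hparts : (∫ t in (0:ℝ)..x,
        (t^a * (x-t)^(b+1) - (((b:ℝ)+1)/((a:ℝ)+1)) * (t^(a+1) * (x-t)^b))) = 0 := by
      rw [intervalIntegral.integral_eq_sub_of_hasDerivAt (fun t _ => hD t)]
      · have hx0 : (0:ℝ)^(a+1) = 0 := by simp
        simp
      · apply Continuous.intervalIntegrable
        continuity
    have hi1 : IntervalIntegrable (fun t : ℝ => t^a * (x-t)^(b+1)) volume 0 x := by
      apply Continuous.intervalIntegrable; continuity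
    have hi2 : IntervalIntegrable (fun t : ℝ => t^(a+1) * (x-t)^b) volume 0 x := by
      apply Continuous.intervalIntegrable; continuity
    rw [intervalIntegral.integral_sub hi1 (hi2.const_mul _)] at hparts
    rw [intervalIntegral.integral_const_mul] at hparts
    have heq : (∫ t in (0:ℝ)..x, t^a * (x-t)^(b+1))
        = (((b:ℝ)+1)/((a:ℝ)+1)) * ∫ t in (0:ℝ)..x, t^(a+1) * (x-t)^b := by linarith
    rw [heq, ih (a+1) x]
    have e1 : a+1+b+1 = a+(b+1)+1 := by omega
    rw [e1]
    have e2 : ((Nat.factorial (a+1) : ℝ)) = ((a:ℝ)+1) * (Nat.factorial a : ℝ) := by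
      push_cast [Nat.factorial_succ]; ring
    have e3 : ((Nat.factorial (b+1) : ℝ)) = ((b:ℝ)+1) * (Nat.factorial b : ℝ) := by
      push_cast [Nat.factorial_succ]; ring
    rw [e2, e3]
    have h1 : ((a:ℝ)+1) ≠ 0 := by positivity
    field_simp

lemma tsum_antidiagonal_eq {h : ℕ×ℕ → ℝ} (hs : Summable h) :
    ∑' p : ℕ×ℕ, h p = ∑' n, ∑ p ∈ Finset.HasAntidiagonal.antidiagonal n, h p := by
  have h1 := Finset.HasAntidiagonal.sigmaAntidiagonalEquivProd.tsum_eq (f := h)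
  have h2 := Summable.tsum_sigma' (f := fun c : (Σ n : ℕ, {x // x ∈ Finset.HasAntidiagonal.antidiagonal n}) =>
      h (Finset.HasAntidiagonal.sigmaAntidiagonalEquivProd c))
    (fun n => (hasSum_fintype _).summable)
    (Finset.HasAntidiagonal.sigmaAntidiagonalEquivProd.summable_iff.mpr hs)
  calc ∑' p : ℕ×ℕ, h p = ∑' c, h (Finset.HasAntidiagonal.sigmaAntidiagonalEquivProd c) := h1.symm
    _ = ∑' n, ∑' c : {x // x ∈ Finset.HasAntidiagonal.antidiagonal n},
          h (Finset.HasAntidiagonal.sigmaAntidiagonalEquivProd ⟨n, c⟩) := h2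
    _ = ∑' n, ∑ p ∈ Finset.HasAntidiagonal.antidiagonal n, h p := by
        apply tsum_congr
        intro n
        rw [tsum_fintype]
        exact Finset.sum_coe_sort (Finset.HasAntidiagonal.antidiagonal n) h

lemma hasSum_integral_conv (x : ℝ) (hx : 0 ≤ x) (c d : ℕ → ℝ) (r s : ℕ → ℕ)
    (hc : Summable (fun j => |c j| * x^(r j))) (hd : Summable (fun k => |d k| * x^(s k))) :
    HasSum (fun p : ℕ×ℕ => c p.1 * d p.2 *
        (x^(r p.1 + s p.2 + 1) * ((Nat.factorial (r p.1) : ℝ) * (Nat.factorial (s p.2) : ℝ))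
          / (Nat.factorial (r p.1 + s p.2 + 1) : ℝ)))
      (∫ t in (0:ℝ)..x, (∑' j, c j * t^(r j)) * (∑' k, d k * (x-t)^(s k))) := by
  set μ := volume.restrict (Set.Ioc (0:ℝ) x) with hμ
  set Fp : ℕ×ℕ → ℝ → ℝ := fun p t => (c p.1 * t^(r p.1)) * (d p.2 * (x-t)^(s p.2)) with hFp
  -- summability of each series at points with |t| ≤ x, |x - t| ≤ x
  have habs : ∀ (e : ℕ → ℝ) (q : ℕ → ℕ), Summable (fun j => |e j| * x^(q j)) →
      ∀ t : ℝ, |t| ≤ x → Summable (fun j => ‖e j * t^(q j)‖) := by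
    intro e q hsum t ht
    apply hsum.of_nonneg_of_le (fun j => norm_nonneg _)
    intro j
    rw [norm_mul, Real.norm_eq_abs, Real.norm_eq_abs, abs_pow]
    apply mul_le_mul_of_nonneg_left _ (abs_nonneg _)
    exact pow_le_pow_left₀ (abs_nonneg t) ht (q j)
  have hIoc : ∀ t ∈ Set.Ioc (0:ℝ) x, |t| ≤ x ∧ |x - t| ≤ x := by
    intro t ht
    obtain ⟨h1, h2⟩ := ht
    constructor
    · rw [abs_of_pos h1]; exact h2
    · rw [abs_of_nonneg (by linarith)]; linarith
  -- pointwise product formula on Ioc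
  have hpt : ∀ t ∈ Set.Ioc (0:ℝ) x,
      (∑' j, c j * t^(r j)) * (∑' k, d k * (x-t)^(s k)) = ∑' p : ℕ×ℕ, Fp p t := by
    intro t ht
    obtain ⟨ht1, ht2⟩ := hIoc t ht
    exact tsum_mul_tsum_of_summable_norm (habs c r hc t ht1) (habs d s hd (x-t) ht2)
  have hInt : ∀ p : ℕ×ℕ, Integrable (Fp p) μ := by
    intro p
    exact (Continuous.integrableOn_Ioc (by continuity))
  have hvol : (μ Set.univ).toReal = x := by
    rw [hμ]
    simp [Real.volume_Ioc, ENNReal.toReal_ofReal hx]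
  have hbound : ∀ p : ℕ×ℕ, (∫ t, ‖Fp p t‖ ∂μ) ≤ (|c p.1| * x^(r p.1)) * (|d p.2| * x^(s p.2)) * x := by
    intro p
    have hle : ∀ t ∈ Set.Ioc (0:ℝ) x,
        ‖Fp p t‖ ≤ (|c p.1| * x^(r p.1)) * (|d p.2| * x^(s p.2)) := by
      intro t ht
      obtain ⟨ht1, ht2⟩ := hIoc t ht
      rw [hFp]
      simp only [norm_mul, Real.norm_eq_abs, abs_pow]
      have b1 : |t|^(r p.1) ≤ x^(r p.1) := pow_le_pow_left₀ (abs_nonneg t) ht1 _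
      have b2 : |x-t|^(s p.2) ≤ x^(s p.2) := pow_le_pow_left₀ (abs_nonneg _) ht2 _
      apply mul_le_mul
      · exact mul_le_mul_of_nonneg_left b1 (abs_nonneg _)
      · exact mul_le_mul_of_nonneg_left b2 (abs_nonneg _)
      · positivity
      · positivity
    calc (∫ t, ‖Fp p t‖ ∂μ) ≤ ∫ _t, (|c p.1| * x^(r p.1)) * (|d p.2| * x^(s p.2)) ∂μ := by
          rw [hμ]
          apply setIntegral_mono_on ((hInt p).norm) (integrable_const _) measurableSet_Ioc
          exact hle
      _ = (|c p.1| * x^(r p.1)) * (|d p.2| * x^(s p.2)) * x := by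
          rw [integral_const, smul_eq_mul, measureReal_def, hvol]
          ring
  have hsb : Summable (fun p : ℕ×ℕ => (|c p.1| * x^(r p.1)) * (|d p.2| * x^(s p.2)) * x) := by
    apply Summable.mul_right
    apply Summable.mul_of_nonneg hc hd
    · intro j; positivity
    · intro k; positivity
  have hsum : Summable (fun p : ℕ×ℕ => ∫ t, ‖Fp p t‖ ∂μ) := by
    apply hsb.of_nonneg_of_le (fun p => integral_nonneg (fun t => norm_nonneg _)) hbound
  have key := MeasureTheory.hasSum_integral_of_summable_integral_norm hInt hsum
  -- identify the sum values
  have hval : ∀ p : ℕ×ℕ, (∫ t, Fp p t ∂μ)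
      = c p.1 * d p.2 * (x^(r p.1 + s p.2 + 1)
          * ((Nat.factorial (r p.1) : ℝ) * (Nat.factorial (s p.2) : ℝ))
          / (Nat.factorial (r p.1 + s p.2 + 1) : ℝ)) := by
    intro p
    have : (∫ t, Fp p t ∂μ) = ∫ t in (0:ℝ)..x, Fp p t := by
      rw [intervalIntegral.integral_of_le hx, hμ]
    rw [this]
    have : (∫ t in (0:ℝ)..x, Fp p t)
        = (c p.1 * d p.2) * ∫ t in (0:ℝ)..x, t^(r p.1) * (x-t)^(s p.2) := by
      rw [← intervalIntegral.integral_const_mul]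
      apply intervalIntegral.integral_congr
      intro t _
      rw [hFp]; ring
    rw [this, beta_nat (s p.2) (r p.1) x]
    try ring
  -- identify the integral
  have hint : (∫ t, (∑' p : ℕ×ℕ, Fp p t) ∂μ)
      = ∫ t in (0:ℝ)..x, (∑' j, c j * t^(r j)) * (∑' k, d k * (x-t)^(s k)) := by
    rw [intervalIntegral.integral_of_le hx, hμ]
    apply setIntegral_congr_fun measurableSet_Ioc
    intro t ht
    exact (hpt t ht).symm
  rw [← hint]
  exact (funext hval : (fun p : ℕ×ℕ => ∫ t, Fp p t ∂μ) = _) ▸ key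

lemma summable_abs_even {c : ℕ → ℝ} (hc : ∀ k, |c k| ≤ 1 / (Nat.factorial k : ℝ))
    {x : ℝ} (hx : 0 ≤ x) : Summable (fun k => |c k| * x^(2*k)) := by
  apply ((summable_even hc x).abs).congr
  intro k
  rw [abs_mul, abs_pow, abs_of_nonneg hx]

lemma summable_abs_odd {c : ℕ → ℝ} (hc : ∀ k, |c k| ≤ 1 / (Nat.factorial k : ℝ))
    {x : ℝ} (hx : 0 ≤ x) : Summable (fun k => |c k| * x^(2*k+1)) := by
  have := (summable_abs_even hc hx).mul_right x
  apply this.congr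
  intro k
  rw [pow_succ]; ring

lemma hasSum_shift {f : ℕ → ℝ} {S : ℝ} (h : HasSum f S) :
    HasSum (fun n => f (n+1)) (S - f 0) := by
  have := (hasSum_nat_add_iff' (f := f) 1).mpr h
  simpa using this

lemma P2 (x : ℝ) (hx : 0 ≤ x) :
    (∫ t in (0:ℝ)..x, J0 t * J1 (x - t)) = J0 x - Real.cos x := by
  have hconv := hasSum_integral_conv x hx aJ bJ (fun j => 2*j) (fun k => 2*k+1)
    (summable_abs_even abs_aJ hx) (summable_abs_odd abs_bJ hx)
  have hfun : (fun t : ℝ => (∑' j, aJ j * t^(2*j)) * (∑' k, bJ k * (x-t)^(2*k+1)))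
      = fun t => J0 t * J1 (x - t) := by
    funext t
    rw [(hasSum_J0 t).tsum_eq, (hasSum_J1 (x-t)).tsum_eq]
  rw [hfun] at hconv
  rw [← hconv.tsum_eq, tsum_antidiagonal_eq hconv.summable]
  have hinner : ∀ n : ℕ, (∑ p ∈ Finset.HasAntidiagonal.antidiagonal n, aJ p.1 * bJ p.2 *
        (x^(2*p.1 + (2*p.2+1) + 1) * ((Nat.factorial (2*p.1) : ℝ) * (Nat.factorial (2*p.2+1) : ℝ))
          / (Nat.factorial (2*p.1 + (2*p.2+1) + 1) : ℝ)))
      = (aJ (n+1) + (-1)^n / ((2*n+2).factorial:ℝ)) * x^(2*n+2) := by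
    intro n
    rw [← pA n, Finset.sum_mul]
    apply Finset.sum_congr rfl
    rintro ⟨j, k⟩ hp
    have hmem : j + k = n := Finset.HasAntidiagonal.mem_antidiagonal.mp hp
    rw [show 2*j + (2*k+1) + 1 = 2*n+2 by omega]
    ring
  rw [tsum_congr hinner]
  have hJ0s : HasSum (fun n => aJ (n+1) * x^(2*(n+1))) (J0 x - 1) := by
    have := hasSum_shift (hasSum_J0 x)
    simpa [aJ] using this
  have hcoss : HasSum (fun n => (-1:ℝ)^(n+1) * x^(2*(n+1)) / ((2*(n+1)).factorial : ℝ))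
      (Real.cos x - 1) := by
    have := hasSum_shift (Real.hasSum_cos x)
    simpa using this
  have htot : HasSum (fun n => (aJ (n+1) + (-1:ℝ)^n / ((2*n+2).factorial:ℝ)) * x^(2*n+2))
      ((J0 x - 1) - (Real.cos x - 1)) := by
    apply (hJ0s.sub hcoss).congr_fun
    intro n
    rw [show 2*(n+1) = 2*n+2 by ring]
    ring
  rw [htot.tsum_eq]
  ring

lemma P3 (x : ℝ) (hx : 0 ≤ x) :
    (∫ t in (0:ℝ)..x, gg t * J0 (x - t)) = 2 * J1 x := by
  have hconv := hasSum_integral_conv x hx gJ aJ (fun j => 2*j) (fun k => 2*k)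
    (summable_abs_even abs_gJ hx) (summable_abs_even abs_aJ hx)
  have hfun : (fun t : ℝ => (∑' j, gJ j * t^(2*j)) * (∑' k, aJ k * (x-t)^(2*k)))
      = fun t => gg t * J0 (x - t) := by
    funext t
    rw [(hasSum_gg t).tsum_eq, (hasSum_J0 (x-t)).tsum_eq]
  rw [hfun] at hconv
  rw [← hconv.tsum_eq, tsum_antidiagonal_eq hconv.summable]
  have hinner : ∀ n : ℕ, (∑ p ∈ Finset.HasAntidiagonal.antidiagonal n, gJ p.1 * aJ p.2 *
        (x^(2*p.1 + 2*p.2 + 1) * ((Nat.factorial (2*p.1) : ℝ) * (Nat.factorial (2*p.2) : ℝ))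
          / (Nat.factorial (2*p.1 + 2*p.2 + 1) : ℝ)))
      = gJ n * x^(2*n+1) := by
    intro n
    rw [← pB n, Finset.sum_mul]
    apply Finset.sum_congr rfl
    rintro ⟨j, k⟩ hp
    have hmem : j + k = n := Finset.HasAntidiagonal.mem_antidiagonal.mp hp
    rw [show 2*j + 2*k + 1 = 2*n+1 by omega]
    ring
  rw [tsum_congr hinner]
  have h2J1 : HasSum (fun n => gJ n * x^(2*n+1)) (2 * J1 x) := by
    have := (hasSum_gg x).mul_left x
    have h : 2 * J1 x = x * gg x := by rw [J1_eq_gg x]; ring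
    rw [h]
    apply this.congr_fun
    intro n
    rw [pow_succ]
    ring
  rw [h2J1.tsum_eq]

lemma P1 (x : ℝ) (hx : 0 ≤ x) :
    (∫ t in (0:ℝ)..x, J1 t) = 1 - J0 x := by
  set c : ℕ → ℝ := fun j => if j = 0 then 1 else 0 with hc
  have hcs : Summable (fun j => |c j| * x^((fun _ => 0) j)) := by
    apply summable_of_finite_support
    apply Set.Finite.subset (Set.finite_singleton 0)
    intro j hj
    simp only [Function.mem_support, hc] at hj
    by_contra h
    simp only [Set.mem_singleton_iff] at h
    apply hj
    rw [if_neg h]; simp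
  have hconv := hasSum_integral_conv x hx c bJ (fun _ => 0) (fun k => 2*k+1)
    hcs (summable_abs_odd abs_bJ hx)
  have hone : (fun t : ℝ => (∑' j, c j * t^((fun _ => 0) j)) * (∑' k, bJ k * (x-t)^(2*k+1)))
      = fun t => J1 (x - t) := by
    funext t
    have : (∑' j, c j * t^((fun _ _ => 0) j t)) = 1 := by
      rw [tsum_eq_single 0]
      · simp [hc]
      · intro j hj; simp [hc, hj]
    simp only [pow_zero] at this ⊢
    rw [this, (hasSum_J1 (x-t)).tsum_eq, one_mul]
  rw [hone] at hconv
  -- collapse to single series over k via injection k ↦ (0, k)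
  have hinj : Function.Injective (fun k : ℕ => ((0, k) : ℕ×ℕ)) := by
    intro a b h; simpa using h
  have hvanish : ∀ p : ℕ×ℕ, p ∉ Set.range (fun k : ℕ => ((0, k) : ℕ×ℕ)) →
      c p.1 * bJ p.2 * (x^((fun _ => 0) p.1 + (2*p.2+1) + 1)
        * ((Nat.factorial ((fun _ => 0) p.1) : ℝ) * (Nat.factorial (2*p.2+1) : ℝ))
        / (Nat.factorial ((fun _ => 0) p.1 + (2*p.2+1) + 1) : ℝ)) = 0 := by
    rintro ⟨a, b⟩ hp
    have ha : a ≠ 0 := by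
      intro h; apply hp; exact ⟨b, by simp [h]⟩
    simp [hc, ha]
  have hsingle := (hinj.hasSum_iff hvanish).mpr hconv
  have hval : ∀ k : ℕ, c 0 * bJ k * (x^(0 + (2*k+1) + 1)
        * ((Nat.factorial 0 : ℝ) * (Nat.factorial (2*k+1) : ℝ))
        / (Nat.factorial (0 + (2*k+1) + 1) : ℝ))
      = -(aJ (k+1) * x^(2*(k+1))) := by
    intro k
    have h1 : (Nat.factorial (0 + (2*k+1) + 1) : ℝ) = (2*(k:ℝ)+2) * (Nat.factorial (2*k+1) : ℝ) := by
      rw [show 0 + (2*k+1) + 1 = (2*k+1)+1 by omega]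
      push_cast [Nat.factorial_succ]
      ring
    have h2 := pC k
    have hfne : (Nat.factorial (2*k+1) : ℝ) ≠ 0 := by positivity
    have hkne : (2*(k:ℝ)+2) ≠ 0 := by positivity
    rw [h1]
    have : c 0 = 1 := by simp [hc]
    rw [this, show 0 + (2*k+1) + 1 = 2*(k+1) by omega]
    simp only [Nat.factorial_zero, Nat.cast_one]
    rw [show -(aJ (k+1) * x^(2*(k+1))) = (-aJ (k+1)) * x^(2*(k+1)) by ring, ← h2]
    field_simp
  have hsingle2 : HasSum (fun k => -(aJ (k+1) * x^(2*(k+1)))) (∫ t in (0:ℝ)..x, J1 (x - t)) := by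
    apply hsingle.congr_fun
    intro k
    exact (hval k).symm
  have hJ0s : HasSum (fun n => -(aJ (n+1) * x^(2*(n+1)))) (1 - J0 x) := by
    have := (hasSum_shift (hasSum_J0 x)).neg
    have h0 : -(J0 x - aJ 0 * x^(2*0)) = 1 - J0 x := by simp [aJ]
    rw [h0] at this
    exact this
  have hflip : (∫ t in (0:ℝ)..x, J1 (x - t)) = ∫ t in (0:ℝ)..x, J1 t := by
    rw [intervalIntegral.integral_comp_sub_left J1 x]
    norm_num
  rw [← hflip]
  exact hsingle2.unique hJ0s


lemma abs_tsum_tail_le (f : ℕ → ℝ) (hs : Summable f) (N : ℕ) (C r : ℝ)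
    (hC : 0 ≤ C) (hr0 : 0 ≤ r) (hr1 : r < 1)
    (hb : ∀ k, |f (k + N)| ≤ C * r^k) :
    |(∑' k, f k) - ∑ k ∈ range N, f k| ≤ C / (1 - r) := by
  have hadd := Summable.sum_add_tsum_nat_add N hs
  have : (∑' k, f k) - ∑ k ∈ range N, f k = ∑' k, f (k + N) := by linarith
  rw [this]
  have hsnorm : Summable (fun k => |f (k + N)|) := by
    apply Summable.of_nonneg_of_le (fun k => abs_nonneg _) hb
    exact (summable_geometric_of_lt_one hr0 hr1).mul_left C
  calc |∑' k, f (k + N)| ≤ ∑' k, |f (k + N)| := by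
        have := norm_tsum_le_tsum_norm (f := fun k => f (k + N)) (by simpa using hsnorm)
        simpa using this
    _ ≤ ∑' k : ℕ, C * r^k := by
        apply Summable.tsum_le_tsum hb hsnorm ((summable_geometric_of_lt_one hr0 hr1).mul_left C)
    _ = C / (1 - r) := by
        rw [tsum_mul_left, tsum_geometric_of_lt_one hr0 hr1]
        rw [div_eq_mul_inv]
  
-- |aJ n * x^(2n)| explicit
lemma abs_aJ_term (x : ℝ) (n : ℕ) : |aJ n * x^(2*n)|
    = x^(2*n) / (4^n * ((Nat.factorial n : ℝ))^2) := by
  have hx : (0:ℝ) ≤ x^(2*n) := by rw [pow_mul]; positivity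
  have h1 : |aJ n| = 1 / (4^n * ((Nat.factorial n : ℝ))^2) := by
    rw [aJ, abs_div, abs_pow, abs_neg, abs_one, one_pow,
      abs_of_pos (by positivity : (0:ℝ) < 4^n * ((Nat.factorial n : ℝ))^2)]
  rw [abs_mul, abs_of_nonneg hx, h1]
  ring

lemma abs_gJ_term (x : ℝ) (n : ℕ) : |gJ n * x^(2*n)|
    = x^(2*n) / (4^n * ((Nat.factorial n : ℝ) * (Nat.factorial (n+1) : ℝ))) := by
  have hx : (0:ℝ) ≤ x^(2*n) := by rw [pow_mul]; positivity
  have h1 : |gJ n| = 1 / (4^n * ((Nat.factorial n : ℝ) * (Nat.factorial (n+1) : ℝ))) := by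
    rw [gJ, abs_div, abs_pow, abs_neg, abs_one, one_pow,
      abs_of_pos (by positivity : (0:ℝ) < 4^n * ((Nat.factorial n : ℝ) * (Nat.factorial (n+1) : ℝ)))]
  rw [abs_mul, abs_of_nonneg hx, h1]
  ring

-- geometric bound for aJ tail at N=3 for |x| ≤ 2 : C = x^6/2304, r = 1/16
lemma aJ_tail_bound (x : ℝ) (hx2 : x^2 ≤ 4) (k : ℕ) :
    |aJ (k + 3) * x^(2*(k+3))| ≤ (x^6/2304) * (1/16)^k := by
  induction k with
  | zero =>
    rw [abs_aJ_term]
    norm_num [Nat.factorial]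
  | succ k ih =>
    have hrec : |aJ (k + 1 + 3) * x^(2*(k+1+3))| 
        = |aJ (k + 3) * x^(2*(k+3))| * (x^2 / (4 * ((k:ℝ)+4)^2)) := by
      rw [abs_aJ_term, abs_aJ_term]
      have e1 : (k+1+3) = (k+3)+1 := by omega
      rw [e1]
      have e2 : ((Nat.factorial ((k+3)+1)) : ℝ) = ((k:ℝ)+4) * (Nat.factorial (k+3) : ℝ) := by
        push_cast [Nat.factorial_succ]; ring
      rw [e2, pow_succ, show 2*((k+3)+1) = 2*(k+3)+2 by ring, pow_add]
      have p1 : ((Nat.factorial (k+3)) : ℝ) ≠ 0 := by positivity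
      have p2 : ((4:ℝ))^(k+3) ≠ 0 := by positivity
      have p3 : ((k:ℝ)+4) ≠ 0 := by positivity
      field_simp
      try ring
      try exact Or.inl trivial
    rw [hrec]
    have hratio : x^2 / (4 * ((k:ℝ)+4)^2) ≤ 1/16 := by
      rw [div_le_div_iff₀ (by positivity) (by norm_num)]
      have hk : (0:ℝ) ≤ (k:ℝ) := Nat.cast_nonneg k
      nlinarith
    have hnn : (0:ℝ) ≤ |aJ (k + 3) * x^(2*(k+3))| := abs_nonneg _
    have hnn2 : (0:ℝ) ≤ x^2 / (4 * ((k:ℝ)+4)^2) := by positivity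
    calc |aJ (k + 3) * x^(2*(k+3))| * (x^2 / (4 * ((k:ℝ)+4)^2))
        ≤ ((x^6/2304) * (1/16)^k) * (1/16) := by
          apply mul_le_mul ih hratio hnn2 (by positivity)
      _ = (x^6/2304) * (1/16)^(k+1) := by rw [pow_succ]; ring

lemma J0_lower (x : ℝ) (hx2 : x^2 ≤ 4) : (1 - x^2/8)^2 - x^6/2000 ≤ J0 x := by
  have hs := (summable_even abs_aJ x)
  have htail := abs_tsum_tail_le (fun n => aJ n * x^(2*n)) hs 3 (x^6/2304) (1/16)
    (by positivity) (by norm_num) (by norm_num) (aJ_tail_bound x hx2)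
  have hsum3 : ∑ k ∈ range 3, aJ k * x^(2*k) = 1 - x^2/4 + x^4/64 := by
    rw [Finset.sum_range_succ, Finset.sum_range_succ, Finset.sum_range_one]
    norm_num [aJ, Nat.factorial]
    ring
  have hJ0 : J0 x = ∑' n, aJ n * x^(2*n) := ((hasSum_J0 x).tsum_eq).symm
  rw [hJ0]
  have h1 : |(∑' k, aJ k * x^(2*k)) - (1 - x^2/4 + x^4/64)| ≤ (x^6/2304) / (1 - 1/16) := by
    rw [← hsum3]; exact htail
  have h2 : (x^6/2304) / (1 - 1/16) ≤ x^6/2000 := by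
    rw [div_le_div_iff₀ (by norm_num) (by norm_num)]
    nlinarith [pow_nonneg (sq_nonneg x) 3, sq_nonneg x]
  have h3 := abs_le.mp h1
  nlinarith [h3.1, h3.2]

lemma J0_pos_of_le_two (x : ℝ) (hx2 : x^2 ≤ 4) : 0 < J0 x := by
  have h := J0_lower x hx2
  have h26 : x^6 = (x^2)^3 := by ring
  have hx6 : x^6 ≤ 64 := by
    rw [h26]
    calc (x^2)^3 ≤ 4^3 := pow_le_pow_left₀ (sq_nonneg x) hx2 3
      _ = 64 := by norm_num
  have hsq : (1:ℝ)/4 ≤ (1 - x^2/8)^2 := by nlinarith [sq_nonneg x]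
  nlinarith

-- gg tail: N=3, C = x^6/9216, r = 1/12, for x^2 <= 25/4
lemma gJ_tail_bound (x : ℝ) (hx2 : x^2 ≤ 25/4) (k : ℕ) :
    |gJ (k + 3) * x^(2*(k+3))| ≤ (x^6/9216) * (1/12)^k := by
  induction k with
  | zero =>
    rw [abs_gJ_term]
    norm_num [Nat.factorial]
  | succ k ih =>
    have hrec : |gJ (k + 1 + 3) * x^(2*(k+1+3))|
        = |gJ (k + 3) * x^(2*(k+3))| * (x^2 / (4 * (((k:ℝ)+4) * ((k:ℝ)+5)))) := by
      rw [abs_gJ_term, abs_gJ_term]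
      have e1 : (k+1+3) = (k+3)+1 := by omega
      rw [e1]
      have e2 : ((Nat.factorial ((k+3)+1)) : ℝ) = ((k:ℝ)+4) * (Nat.factorial (k+3) : ℝ) := by
        push_cast [Nat.factorial_succ]; ring
      have e3 : ((Nat.factorial ((k+3)+1+1)) : ℝ) = ((k:ℝ)+5) * (Nat.factorial ((k+3)+1) : ℝ) := by
        push_cast [Nat.factorial_succ]; ring
      rw [e3, e2, pow_succ, show 2*((k+3)+1) = 2*(k+3)+2 by ring, pow_add]
      have p1 : ((Nat.factorial (k+3)) : ℝ) ≠ 0 := by positivity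
      have p2 : ((4:ℝ))^(k+3) ≠ 0 := by positivity
      have p3 : ((k:ℝ)+4) ≠ 0 := by positivity
      have p4 : ((k:ℝ)+5) ≠ 0 := by positivity
      field_simp
      try ring
      try exact Or.inl trivial
    rw [hrec]
    have hratio : x^2 / (4 * (((k:ℝ)+4) * ((k:ℝ)+5))) ≤ 1/12 := by
      rw [div_le_div_iff₀ (by positivity) (by norm_num)]
      have hk : (0:ℝ) ≤ (k:ℝ) := Nat.cast_nonneg k
      nlinarith
    have hnn2 : (0:ℝ) ≤ x^2 / (4 * (((k:ℝ)+4) * ((k:ℝ)+5))) := by positivity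
    calc |gJ (k + 3) * x^(2*(k+3))| * (x^2 / (4 * (((k:ℝ)+4) * ((k:ℝ)+5))))
        ≤ ((x^6/9216) * (1/12)^k) * (1/12) := by
          apply mul_le_mul ih hratio hnn2 (by positivity)
      _ = (x^6/9216) * (1/12)^(k+1) := by rw [pow_succ]; ring

lemma gg_lower (x : ℝ) (hx2 : x^2 ≤ 25/4) :
    1 - x^2/8 + x^4/192 - x^6/8000 ≤ gg x := by
  have hs := (summable_even abs_gJ x)
  have htail := abs_tsum_tail_le (fun n => gJ n * x^(2*n)) hs 3 (x^6/9216) (1/12)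
    (by positivity) (by norm_num) (by norm_num) (gJ_tail_bound x hx2)
  have hsum3 : ∑ k ∈ range 3, gJ k * x^(2*k) = 1 - x^2/8 + x^4/192 := by
    rw [Finset.sum_range_succ, Finset.sum_range_succ, Finset.sum_range_one]
    norm_num [gJ, Nat.factorial]
    ring
  have hgg : gg x = ∑' n, gJ n * x^(2*n) := ((hasSum_gg x).tsum_eq).symm
  rw [hgg]
  rw [hsum3] at htail
  have h2 : (x^6/9216) / (1 - 1/12) ≤ x^6/8000 := by
    rw [div_le_div_iff₀ (by norm_num) (by norm_num)]
    nlinarith [pow_nonneg (sq_nonneg x) 3]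
  have h3 := abs_le.mp htail
  nlinarith [h3.1, h3.2]

lemma gg_pos (x : ℝ) (hx2 : x^2 ≤ 25/4) : 0 < gg x := by
  have h := gg_lower x hx2
  have hy : (0:ℝ) ≤ x^2 := sq_nonneg x
  have h4 : x^4 = (x^2)^2 := by ring
  have h6 : x^6 = (x^2)^3 := by ring
  nlinarith [sq_nonneg x]

lemma J1_nonneg_of (x : ℝ) (hx0 : 0 ≤ x) (hx2 : x^2 ≤ 25/4) : 0 ≤ J1 x := by
  rw [J1_eq_gg]
  have := gg_pos x hx2
  positivity

-- J0 (5/2) < 0 ; tail at N=5: C = x^10/(4^5*(120)^2), r = 1/20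
lemma aJ_tail_bound5 (x : ℝ) (hx2 : x^2 ≤ 25/4) (k : ℕ) :
    |aJ (k + 5) * x^(2*(k+5))| ≤ (x^10/14745600) * (1/20)^k := by
  induction k with
  | zero =>
    rw [abs_aJ_term]
    norm_num [Nat.factorial]
  | succ k ih =>
    have hrec : |aJ (k + 1 + 5) * x^(2*(k+1+5))|
        = |aJ (k + 5) * x^(2*(k+5))| * (x^2 / (4 * ((k:ℝ)+6)^2)) := by
      rw [abs_aJ_term, abs_aJ_term]
      have e1 : (k+1+5) = (k+5)+1 := by omega
      rw [e1]
      have e2 : ((Nat.factorial ((k+5)+1)) : ℝ) = ((k:ℝ)+6) * (Nat.factorial (k+5) : ℝ) := by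
        push_cast [Nat.factorial_succ]; ring
      rw [e2, pow_succ, show 2*((k+5)+1) = 2*(k+5)+2 by ring, pow_add]
      have p1 : ((Nat.factorial (k+5)) : ℝ) ≠ 0 := by positivity
      have p2 : ((4:ℝ))^(k+5) ≠ 0 := by positivity
      have p3 : ((k:ℝ)+6) ≠ 0 := by positivity
      field_simp
      try ring
      try exact Or.inl trivial
    rw [hrec]
    have hratio : x^2 / (4 * ((k:ℝ)+6)^2) ≤ 1/20 := by
      rw [div_le_div_iff₀ (by positivity) (by norm_num)]
      have hk : (0:ℝ) ≤ (k:ℝ) := Nat.cast_nonneg k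
      nlinarith
    have hnn2 : (0:ℝ) ≤ x^2 / (4 * ((k:ℝ)+6)^2) := by positivity
    calc |aJ (k + 5) * x^(2*(k+5))| * (x^2 / (4 * ((k:ℝ)+6)^2))
        ≤ ((x^10/14745600) * (1/20)^k) * (1/20) := by
          apply mul_le_mul ih hratio hnn2 (by positivity)
      _ = (x^10/14745600) * (1/20)^(k+1) := by rw [pow_succ]; ring

lemma J0_half5_neg : J0 (5/2) < 0 := by
  set x : ℝ := 5/2 with hxdef
  have hx2 : x^2 ≤ 25/4 := by norm_num [hxdef]
  have hs := (summable_even abs_aJ x)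
  have htail := abs_tsum_tail_le (fun n => aJ n * x^(2*n)) hs 5 (x^10/14745600) (1/20)
    (by positivity) (by norm_num) (by norm_num) (aJ_tail_bound5 x hx2)
  have hsum5 : ∑ k ∈ range 5, aJ k * x^(2*k)
      = 1 - x^2/4 + x^4/64 - x^6/2304 + x^8/147456 := by
    rw [Finset.sum_range_succ, Finset.sum_range_succ, Finset.sum_range_succ,
      Finset.sum_range_succ, Finset.sum_range_one]
    norm_num [aJ, Nat.factorial]
    try ring
  have hJ0 : J0 x = ∑' n, aJ n * x^(2*n) := ((hasSum_J0 x).tsum_eq).symm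
  rw [hJ0]
  rw [hsum5] at htail
  have h3 := (abs_le.mp htail).2
  have : (1:ℝ) - x^2/4 + x^4/64 - x^6/2304 + x^8/147456 < -0.001 := by
    rw [hxdef]
    norm_num
  have h4 : (x^10/14745600) / (1 - 1/20) < 0.001 := by
    rw [hxdef]
    norm_num
  linarith

def Szero : Set ℝ := {x : ℝ | 0 < x ∧ J0 x = 0}

lemma Szero_eq : Szero = {x : ℝ | 2 ≤ x ∧ J0 x = 0} := by
  ext z
  constructor
  · rintro ⟨hz0, hz⟩
    refine ⟨?_, hz⟩
    by_contra h
    push_neg at h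
    have : 0 < J0 z := J0_pos_of_le_two z (by nlinarith)
    rw [hz] at this
    exact lt_irrefl 0 this
  · rintro ⟨hz2, hz⟩
    exact ⟨by linarith, hz⟩

lemma exists_zero : ∃ z, z ∈ Set.Ioo (2:ℝ) (5/2) ∧ J0 z = 0 := by
  have hcont : ContinuousOn J0 (Set.Icc (2:ℝ) (5/2)) := continuous_J0.continuousOn
  have h1 : J0 (5/2) < 0 := J0_half5_neg
  have h2 : 0 < J0 2 := J0_pos_of_le_two 2 (by norm_num)
  have := intermediate_value_Ioo' (by norm_num : (2:ℝ) ≤ 5/2) hcont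
  have hmem : (0:ℝ) ∈ Set.Ioo (J0 (5/2)) (J0 2) := ⟨h1, h2⟩
  obtain ⟨z, hz, hz0⟩ := this hmem
  exact ⟨z, hz, hz0⟩

lemma bddBelow_Szero : BddBelow {x : ℝ | 0 < x ∧ J0 x = 0} :=
  ⟨0, fun y hy => le_of_lt hy.1⟩

lemma c0_mem : 2 ≤ c0 ∧ c0 < 5/2 ∧ J0 c0 = 0 := by
  obtain ⟨z, hzIoo, hz0⟩ := exists_zero
  have hzT : z ∈ {x : ℝ | 2 ≤ x ∧ J0 x = 0} := ⟨by linarith [hzIoo.1], hz0⟩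
  have hclosed : IsClosed {x : ℝ | 2 ≤ x ∧ J0 x = 0} := by
    have : {x : ℝ | 2 ≤ x ∧ J0 x = 0} = Set.Ici 2 ∩ J0 ⁻¹' {0} := by
      ext y; simp [Set.mem_Ici, Set.mem_preimage]
    rw [this]
    exact isClosed_Ici.inter (isClosed_singleton.preimage continuous_J0)
  have hbddT : BddBelow {x : ℝ | 2 ≤ x ∧ J0 x = 0} := ⟨2, fun y hy => hy.1⟩
  have hc0T : c0 = sInf {x : ℝ | 2 ≤ x ∧ J0 x = 0} := by
    rw [show c0 = sInf Szero from rfl, Szero_eq]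
  have hmem : sInf {x : ℝ | 2 ≤ x ∧ J0 x = 0} ∈ {x : ℝ | 2 ≤ x ∧ J0 x = 0} :=
    IsClosed.csInf_mem hclosed ⟨z, hzT⟩ hbddT
  have hle : c0 ≤ z := by
    rw [hc0T]
    exact csInf_le hbddT hzT
  exact ⟨hc0T ▸ hmem.1, by linarith [hzIoo.2], hc0T ▸ hmem.2⟩

lemma cos_c0_neg : Real.cos c0 < 0 := by
  obtain ⟨h1, h2, _⟩ := c0_mem
  apply Real.cos_neg_of_pi_div_two_lt_of_lt
  · have := Real.pi_lt_d2
    linarith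
  · have := Real.pi_gt_three
    linarith

lemma J0_pos_of_lt_c0 (u : ℝ) (hu0 : 0 ≤ u) (huc : u < c0) : 0 < J0 u := by
  obtain ⟨hc2, hc52, hcz⟩ := c0_mem
  rcases le_or_gt u 2 with h | h
  · exact J0_pos_of_le_two u (by nlinarith)
  · by_contra hneg
    push_neg at hneg
    rcases eq_or_lt_of_le hneg with heq | hlt
    · have hmem : u ∈ {x : ℝ | 0 < x ∧ J0 x = 0} := ⟨by linarith, heq⟩
      have : c0 ≤ u := csInf_le bddBelow_Szero hmem
      linarith
    · have hcont : ContinuousOn J0 (Set.Icc (2:ℝ) u) := continuous_J0.continuousOn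
      have := intermediate_value_Ioo' (by linarith : (2:ℝ) ≤ u) hcont
      have hmem : (0:ℝ) ∈ Set.Ioo (J0 u) (J0 2) :=
        ⟨hlt, J0_pos_of_le_two 2 (by norm_num)⟩
      obtain ⟨z, hzIoo, hz0⟩ := this hmem
      have hmem : z ∈ {x : ℝ | 0 < x ∧ J0 x = 0} := ⟨by linarith [hzIoo.1], hz0⟩
      have : c0 ≤ z := csInf_le bddBelow_Szero hmem
      linarith [hzIoo.2]

lemma J1_nonneg_upto_c0 (u : ℝ) (hu0 : 0 ≤ u) (huc : u ≤ c0) : 0 ≤ J1 u := by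
  obtain ⟨_, hc52, _⟩ := c0_mem
  exact J1_nonneg_of u hu0 (by nlinarith)

/-- `F_∞(θ) = J₀(θ c₀/π)`. -/
noncomputable def Finf (θ : ℝ) : ℝ := J0 (θ * c0 / Real.pi)

/-- The critical generating function `F(x_c; θ) = c₀ J₁(θ c₀/π)/(2πθ)`, with
`F(0) = (c₀/(2π))²`. -/
noncomputable def F (θ : ℝ) : ℝ :=
  if θ = 0 then (c0 / (2 * Real.pi)) ^ 2
  else c0 * J1 (θ * c0 / Real.pi) / (2 * Real.pi * θ)

/-- The invariant density `ν(θ) = -(c₀/(π cos c₀)) J₀(θc₀/π) J₁((π−θ)c₀/π)`. -/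
noncomputable def nu (θ : ℝ) : ℝ :=
  -(c0 / (Real.pi * Real.cos c0)) * J0 (θ * c0 / Real.pi) *
    J1 ((Real.pi - θ) * c0 / Real.pi)



lemma c0_pos : 0 < c0 := by linarith [c0_mem.1]

lemma Kpos : 0 < -(c0 / (Real.pi * Real.cos c0)) := by
  have h1 := c0_pos
  have h2 := Real.pi_pos
  have h3 := cos_c0_neg
  have h4 : Real.pi * Real.cos c0 < 0 := mul_neg_of_pos_of_neg h2 h3
  have := div_neg_of_pos_of_neg h1 h4
  linarith

lemma J0_nonneg_upto_c0 (u : ℝ) (hu0 : 0 ≤ u) (huc : u ≤ c0) : 0 ≤ J0 u := by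
  rcases lt_or_eq_of_le huc with h | h
  · exact le_of_lt (J0_pos_of_lt_c0 u hu0 h)
  · rw [h, c0_mem.2.2]

lemma nu_nonneg (θ : ℝ) (hθ : θ ∈ Set.Icc (0:ℝ) Real.pi) : 0 ≤ nu θ := by
  obtain ⟨h0, h1⟩ := hθ
  have hπ := Real.pi_pos
  have hc := c0_pos
  have harg1 : 0 ≤ θ * c0 / Real.pi := by positivity
  have harg1' : θ * c0 / Real.pi ≤ c0 := by
    rw [div_le_iff₀ hπ]
    nlinarith
  have harg2 : 0 ≤ (Real.pi - θ) * c0 / Real.pi := by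
    have : 0 ≤ Real.pi - θ := by linarith
    positivity
  have harg2' : (Real.pi - θ) * c0 / Real.pi ≤ c0 := by
    rw [div_le_iff₀ hπ]
    nlinarith
  have hJ0 := J0_nonneg_upto_c0 _ harg1 harg1'
  have hJ1 := J1_nonneg_upto_c0 _ harg2 harg2'
  have hK := Kpos
  rw [nu, mul_assoc]
  positivity

lemma nu_integral : (∫ θ in (0:ℝ)..Real.pi, nu θ) = 1 := by
  have hπ := Real.pi_pos
  have hc := c0_pos
  have hm : c0 / Real.pi ≠ 0 := by positivity
  have step1 : (∫ θ in (0:ℝ)..Real.pi, nu θ)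
      = -(c0 / (Real.pi * Real.cos c0)) *
        ∫ θ in (0:ℝ)..Real.pi, (fun u => J0 u * J1 (c0 - u)) (θ * (c0 / Real.pi)) := by
    rw [← intervalIntegral.integral_const_mul]
    apply intervalIntegral.integral_congr
    intro θ _
    rw [nu]
    have e1 : θ * c0 / Real.pi = θ * (c0 / Real.pi) := by ring
    have e2 : (Real.pi - θ) * c0 / Real.pi = c0 - θ * (c0 / Real.pi) := by
      field_simp
    rw [e1, e2]
    ring
  rw [step1, intervalIntegral.integral_comp_mul_right (fun u => J0 u * J1 (c0 - u)) hm]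
  rw [zero_mul, show Real.pi * (c0 / Real.pi) = c0 by field_simp]
  rw [P2 c0 (le_of_lt hc), c0_mem.2.2]
  have hcos := cos_c0_neg
  have hcosne : Real.cos c0 ≠ 0 := ne_of_lt hcos
  rw [smul_eq_mul]
  field_simp
  ring

lemma F_eq (α : ℝ) : F α = (c0^2/(4*Real.pi^2)) * gg (α * c0 / Real.pi) := by
  have hπ : Real.pi ≠ 0 := ne_of_gt Real.pi_pos
  rw [F]
  by_cases h : α = 0
  · rw [if_pos h, h, zero_mul, zero_div, gg_zero]
    field_simp
    try ring
    try exact Or.inl trivial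
  · rw [if_neg h, J1_eq_gg]
    field_simp
    ring

lemma continuous_F : Continuous F := by
  have : F = fun α => (c0^2/(4*Real.pi^2)) * gg (α * c0 / Real.pi) := funext F_eq
  rw [this]
  apply Continuous.mul continuous_const
  exact continuous_gg.comp (by continuity)

lemma Finf_pos (θ : ℝ) (h0 : 0 ≤ θ) (h1 : θ < Real.pi) : 0 < Finf θ := by
  have hπ := Real.pi_pos
  have hc := c0_pos
  apply J0_pos_of_lt_c0
  · positivity
  · rw [div_lt_iff₀ hπ]
    nlinarith

lemma ae_ne_point (pt : ℝ) : ∀ᵐ x : ℝ, x ≠ pt := by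
  have h : (volume : Measure ℝ) {pt} = 0 := Real.volume_singleton
  rw [MeasureTheory.ae_iff]
  convert h using 2
  ext x
  simp

lemma integral_congr_ae_point {f g : ℝ → ℝ} {a b pt : ℝ}
    (h : ∀ x ∈ Set.uIoc a b, x ≠ pt → f x = g x) :
    ∫ x in a..b, f x = ∫ x in a..b, g x := by
  apply intervalIntegral.integral_congr_ae
  filter_upwards [ae_ne_point pt] with x hx hmem
  exact h x hmem hx

lemma intJ1_section (y : ℝ) (hy0 : 0 ≤ y) (hyπ : y ≤ Real.pi) :
    (∫ θ in (0:ℝ)..y, J1 ((Real.pi - θ) * c0 / Real.pi))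
    = (Real.pi/c0) * J0 ((Real.pi - y) * c0 / Real.pi) := by
  have hπ : (0:ℝ) < Real.pi := Real.pi_pos
  have hc := c0_pos
  have hm : c0 / Real.pi ≠ 0 := by positivity
  have step1 : (∫ θ in (0:ℝ)..y, J1 ((Real.pi - θ) * c0 / Real.pi))
      = ∫ θ in (0:ℝ)..y, (fun u => J1 (c0 - u)) (θ * (c0 / Real.pi)) := by
    apply intervalIntegral.integral_congr
    intro θ _
    congr 1
    field_simp
  rw [step1, intervalIntegral.integral_comp_mul_right (fun u => J1 (c0 - u)) hm,
    zero_mul, intervalIntegral.integral_comp_sub_left J1 c0]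
  have e1 : c0 - y * (c0 / Real.pi) = (Real.pi - y) * c0 / Real.pi := by
    field_simp
  have e2 : c0 - 0 = c0 := by ring
  rw [e1, e2]
  set a := (Real.pi - y) * c0 / Real.pi with ha
  have ha0 : 0 ≤ a := by
    rw [ha]
    have : 0 ≤ Real.pi - y := by linarith
    positivity
  have hac0 : a ≤ c0 := by
    rw [ha, div_le_iff₀ hπ]
    nlinarith
  have hadd : (∫ t in (0:ℝ)..a, J1 t) + (∫ t in a..c0, J1 t) = ∫ t in (0:ℝ)..c0, J1 t := by
    apply intervalIntegral.integral_add_adjacent_intervals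
    · exact continuous_J1.intervalIntegrable _ _
    · exact continuous_J1.intervalIntegrable _ _
  have h1 := P1 a ha0
  have h2 := P1 c0 (le_of_lt hc)
  have : (∫ t in a..c0, J1 t) = J0 a - J0 c0 := by
    rw [h1, h2] at hadd
    linarith
  rw [this, c0_mem.2.2, smul_eq_mul]
  field_simp
  ring

lemma intF_section (s : ℝ) (hs0 : 0 ≤ s) (hsπ : s ≤ Real.pi) :
    (∫ α in (0:ℝ)..s, F α * J0 ((s - α) * c0 / Real.pi))
    = (c0/(2*Real.pi)) * J1 (s * c0 / Real.pi) := by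
  have hπ : (0:ℝ) < Real.pi := Real.pi_pos
  have hc := c0_pos
  have hm : c0 / Real.pi ≠ 0 := by positivity
  have step1 : (∫ α in (0:ℝ)..s, F α * J0 ((s - α) * c0 / Real.pi))
      = (c0^2/(4*Real.pi^2)) * ∫ α in (0:ℝ)..s,
          (fun u => gg u * J0 (s * (c0/Real.pi) - u)) (α * (c0 / Real.pi)) := by
    rw [← intervalIntegral.integral_const_mul]
    apply intervalIntegral.integral_congr
    intro α _
    show F α * J0 ((s - α) * c0 / Real.pi) = _
    rw [F_eq α]
    have e1 : α * c0 / Real.pi = α * (c0 / Real.pi) := by ring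
    have e2 : (s - α) * c0 / Real.pi = s * (c0/Real.pi) - α * (c0/Real.pi) := by
      field_simp
    rw [e1, e2]
    ring
  rw [step1, intervalIntegral.integral_comp_mul_right
    (fun u => gg u * J0 (s * (c0/Real.pi) - u)) hm, zero_mul]
  have hsm0 : 0 ≤ s * (c0 / Real.pi) := by positivity
  rw [P3 (s * (c0/Real.pi)) hsm0, smul_eq_mul]
  have e3 : s * (c0 / Real.pi) = s * c0 / Real.pi := by ring
  rw [e3]
  field_simp
  ring

lemma nu_invariant_eq (β : ℝ) (hβ : β ∈ Set.Ioo (0:ℝ) Real.pi) :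
    (∫ θ in (0:ℝ)..Real.pi, nu θ * (2 * Finf β / Finf θ) *
        ∫ α in (0:ℝ)..Real.pi, if θ < α + β ∧ α + β < Real.pi then F α else 0) = nu β := by
  obtain ⟨hβ0, hβπ⟩ := hβ
  have hπ : (0:ℝ) < Real.pi := Real.pi_pos
  have hc := c0_pos
  have hcos := cos_c0_neg
  have hcosne : Real.cos c0 ≠ 0 := ne_of_lt hcos
  set C1 : ℝ := -(2*c0/(Real.pi*Real.cos c0)) * J0 (β*c0/Real.pi) with hC1
  set f : ℝ → ℝ → ℝ := fun θ α =>
    if θ < α+β ∧ α+β < Real.pi then J1 ((Real.pi-θ)*c0/Real.pi) * F α else 0 with hf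
  -- Step A : pointwise rewriting of the θ-integrand
  have hpoint : ∀ θ ∈ Set.uIcc (0:ℝ) Real.pi,
      nu θ * (2 * Finf β / Finf θ) *
        (∫ α in (0:ℝ)..Real.pi, if θ < α + β ∧ α + β < Real.pi then F α else 0)
      = C1 * ∫ α in (0:ℝ)..Real.pi, f θ α := by
    intro θ hθ
    rw [Set.uIcc_of_le (le_of_lt hπ)] at hθ
    obtain ⟨h0, h1⟩ := hθ
    have hIft : (∫ α in (0:ℝ)..Real.pi, f θ α)
        = J1 ((Real.pi-θ)*c0/Real.pi) *
          ∫ α in (0:ℝ)..Real.pi, (if θ < α + β ∧ α + β < Real.pi then F α else 0) := by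
      rw [← intervalIntegral.integral_const_mul]
      apply intervalIntegral.integral_congr
      intro α _
      by_cases h : θ < α+β ∧ α+β < Real.pi
      · simp only [hf, if_pos h]
      · simp only [hf, if_neg h, mul_zero]
    rw [hIft]
    rcases lt_or_eq_of_le h1 with hlt | heq
    · have hFinf : 0 < Finf θ := Finf_pos θ h0 hlt
      have hne : Finf θ ≠ 0 := ne_of_gt hFinf
      have hne' : J0 (θ*c0/Real.pi) ≠ 0 := by
        rw [Finf] at hne
        exact hne
      have key : nu θ * (2 * Finf β / Finf θ) = C1 * J1 ((Real.pi-θ)*c0/Real.pi) := by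
        rw [nu, hC1]
        simp only [Finf]
        field_simp
        have hne'' : J0 (c0 * θ / Real.pi) ≠ 0 := by rwa [show c0 * θ / Real.pi = θ * c0 / Real.pi by ring]
        rw [mul_assoc, mul_div_cancel_left₀ _ hne'']
      calc nu θ * (2 * Finf β / Finf θ) *
            (∫ α in (0:ℝ)..Real.pi, if θ < α + β ∧ α + β < Real.pi then F α else 0)
          = (nu θ * (2 * Finf β / Finf θ)) *
            (∫ α in (0:ℝ)..Real.pi, if θ < α + β ∧ α + β < Real.pi then F α else 0) := by ring
        _ = C1 * (J1 ((Real.pi-θ)*c0/Real.pi) *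
            (∫ α in (0:ℝ)..Real.pi, if θ < α + β ∧ α + β < Real.pi then F α else 0)) := by
            rw [key]; ring
    · subst heq
      have hFinfπ : Finf Real.pi = 0 := by
        rw [Finf, show Real.pi*c0/Real.pi = c0 by field_simp]
        exact c0_mem.2.2
      have hJ1π : J1 ((Real.pi-Real.pi)*c0/Real.pi) = 0 := by
        rw [show ((Real.pi:ℝ)-Real.pi)*c0/Real.pi = 0 by ring]
        exact J1_zero
      rw [hFinfπ, hJ1π]
      simp
  rw [intervalIntegral.integral_congr hpoint, intervalIntegral.integral_const_mul]
  -- Step C : Fubini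
  have hconth : Continuous (fun p : ℝ×ℝ => J1 ((Real.pi - p.1)*c0/Real.pi) * F p.2) := by
    apply Continuous.mul
    · exact continuous_J1.comp
        (((continuous_const.sub continuous_fst).mul continuous_const).div_const _)
    · exact continuous_F.comp continuous_snd
  have hInt : Integrable (Function.uncurry f)
      ((volume.restrict (Set.Ioc (0:ℝ) Real.pi)).prod (volume.restrict (Set.Ioc (0:ℝ) Real.pi))) := by
    rw [Measure.prod_restrict]
    have hSopen : IsOpen {p : ℝ×ℝ | p.1 < p.2 + β ∧ p.2 + β < Real.pi} :=
      (isOpen_lt continuous_fst (continuous_snd.add continuous_const)).inter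
        (isOpen_lt (continuous_snd.add continuous_const) continuous_const)
    have heq : Function.uncurry f
        = Set.indicator {p : ℝ×ℝ | p.1 < p.2 + β ∧ p.2 + β < Real.pi}
            (fun p : ℝ×ℝ => J1 ((Real.pi - p.1)*c0/Real.pi) * F p.2) := by
      funext p
      rcases p with ⟨θ, α⟩
      by_cases h : θ < α + β ∧ α + β < Real.pi
      · rw [Set.indicator_of_mem
          (show (θ,α) ∈ {p : ℝ×ℝ | p.1 < p.2 + β ∧ p.2 + β < Real.pi} from h)]
        simp only [Function.uncurry, hf, if_pos h]
      · rw [Set.indicator_of_notMem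
          (show (θ,α) ∉ {p : ℝ×ℝ | p.1 < p.2 + β ∧ p.2 + β < Real.pi} from h)]
        simp only [Function.uncurry, hf, if_neg h]
    rw [heq]
    apply MeasureTheory.IntegrableOn.indicator _ hSopen.measurableSet
    apply ((hconth.continuousOn).integrableOn_compact (isCompact_Icc.prod isCompact_Icc)).mono_set
    exact Set.prod_mono Set.Ioc_subset_Icc_self Set.Ioc_subset_Icc_self
  have hswap : (∫ θ in (0:ℝ)..Real.pi, ∫ α in (0:ℝ)..Real.pi, f θ α)
      = ∫ α in Set.Ioc (0:ℝ) Real.pi, ∫ θ in Set.Ioc (0:ℝ) Real.pi, f θ α := by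
    rw [intervalIntegral.integral_of_le (le_of_lt hπ)]
    have : ∀ θ : ℝ, (∫ α in (0:ℝ)..Real.pi, f θ α) = ∫ α in Set.Ioc (0:ℝ) Real.pi, f θ α :=
      fun θ => intervalIntegral.integral_of_le (le_of_lt hπ)
    rw [setIntegral_congr_fun measurableSet_Ioc (fun θ _ => this θ)]
    exact MeasureTheory.integral_integral_swap hInt
  rw [hswap]
  -- Step D : inner θ-integral
  have hInner : ∀ α ∈ Set.Ioc (0:ℝ) Real.pi, (∫ θ in Set.Ioc (0:ℝ) Real.pi, f θ α)
      = (if α + β < Real.pi then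
          F α * ((Real.pi/c0) * J0 ((Real.pi-(α+β))*c0/Real.pi)) else 0) := by
    intro α hα
    rw [← intervalIntegral.integral_of_le (le_of_lt hπ)]
    by_cases hab : α + β < Real.pi
    · rw [if_pos hab]
      have hab0 : 0 < α + β := by
        obtain ⟨hα1, _⟩ := hα
        linarith
      have hcontJ : Continuous (fun θ : ℝ => J1 ((Real.pi-θ)*c0/Real.pi) * F α) := by
        apply Continuous.mul _ continuous_const
        exact continuous_J1.comp
          (((continuous_const.sub continuous_id).mul continuous_const).div_const _)
      have hfeq : ∀ θ, f θ α
          = Set.indicator (Set.Iio (α+β)) (fun θ => J1 ((Real.pi-θ)*c0/Real.pi) * F α) θ := by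
        intro θ
        by_cases h : θ < α+β
        · rw [Set.indicator_of_mem (Set.mem_Iio.mpr h)]
          simp only [hf]
          rw [if_pos (show θ < α + β ∧ α + β < Real.pi from ⟨h, hab⟩)]
        · rw [Set.indicator_of_notMem (by simpa using h)]
          simp only [hf]
          rw [if_neg]
          tauto
      rw [intervalIntegral.integral_congr (fun θ _ => hfeq θ)]
      have hii : ∀ a b : ℝ, IntervalIntegrable
          (Set.indicator (Set.Iio (α+β)) (fun θ => J1 ((Real.pi-θ)*c0/Real.pi) * F α))
          volume a b := by
        intro a b
        rw [intervalIntegrable_iff]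
        exact (hcontJ.integrableOn_Ioc.indicator measurableSet_Iio)
      have hsplit := intervalIntegral.integral_add_adjacent_intervals
        (hii 0 (α+β)) (hii (α+β) Real.pi)
      have h2 : (∫ θ in (α+β)..Real.pi,
          Set.indicator (Set.Iio (α+β)) (fun θ => J1 ((Real.pi-θ)*c0/Real.pi) * F α) θ) = 0 := by
        have hz : ∀ x ∈ Set.uIoc (α+β) Real.pi,
            Set.indicator (Set.Iio (α+β)) (fun θ => J1 ((Real.pi-θ)*c0/Real.pi) * F α) x
            = (fun _ => (0:ℝ)) x := by
          intro x hx
          rw [Set.uIoc_of_le (le_of_lt hab)] at hx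
          apply Set.indicator_of_notMem
          simp only [Set.mem_Iio, not_lt]
          exact le_of_lt hx.1
        rw [intervalIntegral.integral_congr_ae (Filter.Eventually.of_forall hz)]
        simp
      have h1 : (∫ θ in (0:ℝ)..(α+β),
          Set.indicator (Set.Iio (α+β)) (fun θ => J1 ((Real.pi-θ)*c0/Real.pi) * F α) θ)
          = ∫ θ in (0:ℝ)..(α+β), J1 ((Real.pi-θ)*c0/Real.pi) * F α := by
        apply integral_congr_ae_point (pt := α+β)
        intro x hx hne
        rw [Set.uIoc_of_le (le_of_lt hab0)] at hx
        apply Set.indicator_of_mem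
        simp only [Set.mem_Iio]
        exact lt_of_le_of_ne hx.2 hne
      have hval : (∫ θ in (0:ℝ)..(α+β), J1 ((Real.pi-θ)*c0/Real.pi) * F α)
          = F α * ((Real.pi/c0) * J0 ((Real.pi-(α+β))*c0/Real.pi)) := by
        rw [intervalIntegral.integral_mul_const,
          intJ1_section (α+β) (le_of_lt hab0) (le_of_lt hab)]
        ring
      rw [← hsplit, h1, h2, hval, add_zero]
    · rw [if_neg hab]
      have : ∀ θ : ℝ, f θ α = (fun _ => (0:ℝ)) θ := by
        intro θ
        simp only [hf]
        rw [if_neg]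
        tauto
      rw [intervalIntegral.integral_congr (fun θ _ => this θ)]
      simp
  rw [setIntegral_congr_fun measurableSet_Ioc hInner,
    ← intervalIntegral.integral_of_le (le_of_lt hπ)]
  -- Step E : outer α-integral
  set s : ℝ := Real.pi - β with hs
  have hs0 : 0 < s := by rw [hs]; linarith
  have hsπ : s < Real.pi := by rw [hs]; linarith
  have hNice : Continuous (fun α : ℝ => F α * ((Real.pi/c0) * J0 ((Real.pi-(α+β))*c0/Real.pi))) := by
    apply continuous_F.mul
    apply Continuous.mul continuous_const
    exact continuous_J0.comp
      (((continuous_const.sub (continuous_id.add continuous_const)).mul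
        continuous_const).div_const _)
  have hEeq : ∀ α : ℝ, (if α + β < Real.pi then
        F α * ((Real.pi/c0) * J0 ((Real.pi-(α+β))*c0/Real.pi)) else 0)
      = Set.indicator (Set.Iio s)
          (fun α => F α * ((Real.pi/c0) * J0 ((Real.pi-(α+β))*c0/Real.pi))) α := by
    intro α
    by_cases h : α + β < Real.pi
    · rw [if_pos h, Set.indicator_of_mem]
      simp only [Set.mem_Iio, hs]
      linarith
    · rw [if_neg h, Set.indicator_of_notMem]
      simp only [Set.mem_Iio, hs, not_lt]
      linarith
  rw [intervalIntegral.integral_congr (fun α _ => hEeq α)]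
  have hii2 : ∀ a b : ℝ, IntervalIntegrable
      (Set.indicator (Set.Iio s)
        (fun α => F α * ((Real.pi/c0) * J0 ((Real.pi-(α+β))*c0/Real.pi)))) volume a b := by
    intro a b
    rw [intervalIntegrable_iff]
    exact (hNice.integrableOn_Ioc.indicator measurableSet_Iio)
  have hsplit2 := intervalIntegral.integral_add_adjacent_intervals (hii2 0 s) (hii2 s Real.pi)
  have h2' : (∫ α in s..Real.pi, Set.indicator (Set.Iio s)
      (fun α => F α * ((Real.pi/c0) * J0 ((Real.pi-(α+β))*c0/Real.pi))) α) = 0 := by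
    have hz : ∀ x ∈ Set.uIoc s Real.pi, Set.indicator (Set.Iio s)
        (fun α => F α * ((Real.pi/c0) * J0 ((Real.pi-(α+β))*c0/Real.pi))) x
        = (fun _ => (0:ℝ)) x := by
      intro x hx
      rw [Set.uIoc_of_le (le_of_lt hsπ)] at hx
      apply Set.indicator_of_notMem
      simp only [Set.mem_Iio, not_lt]
      exact le_of_lt hx.1
    rw [intervalIntegral.integral_congr_ae (Filter.Eventually.of_forall hz)]
    simp
  have h1' : (∫ α in (0:ℝ)..s, Set.indicator (Set.Iio s)
      (fun α => F α * ((Real.pi/c0) * J0 ((Real.pi-(α+β))*c0/Real.pi))) α)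
      = ∫ α in (0:ℝ)..s, (Real.pi/c0) * (F α * J0 ((s - α)*c0/Real.pi)) := by
    apply integral_congr_ae_point (pt := s)
    intro x hx hne
    rw [Set.uIoc_of_le (le_of_lt hs0)] at hx
    rw [Set.indicator_of_mem]
    · have harg : Real.pi - (x+β) = s - x := by rw [hs]; ring
      rw [harg]
      ring
    · simp only [Set.mem_Iio]
      exact lt_of_le_of_ne hx.2 hne
  rw [← hsplit2, h1', h2', add_zero, intervalIntegral.integral_const_mul,
    intF_section s (le_of_lt hs0) (le_of_lt hsπ)]
  -- final algebra
  rw [nu, hC1, hs]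
  field_simp

/-- Proposition 4.2: `ν` is the invariant probability density of the Markov chain of
angles along the spine. -/
theorem nu_invariant_density :
    (∀ θ ∈ Set.Icc (0 : ℝ) Real.pi, 0 ≤ nu θ) ∧
    (∫ θ in (0:ℝ)..Real.pi, nu θ) = 1 ∧
    (∀ β ∈ Set.Ioo (0 : ℝ) Real.pi,
      (∫ θ in (0:ℝ)..Real.pi, nu θ * (2 * Finf β / Finf θ) *
        ∫ α in (0:ℝ)..Real.pi,
          if θ < α + β ∧ α + β < Real.pi then F α else 0) = nu β) := by
  exact ⟨fun θ hθ => nu_nonneg θ hθ, nu_integral, fun β hβ => nu_invariant_eq β hβ⟩
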